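/- Along the closed-loop dynamics ρ' = −i[H_A + u H_B, ρ], ρ_d' = −i[H_A, ρ_d] with feedback u = tr(ρ_d · (−i)[H_B, ρ]), the Lyapunov function V(t) = tr(ρ(t)²) − tr(ρ_d(t) ρ(t)) satisfies V'(t) = −u(t)² ≤ 0. -/

import Mathlib

open Matrix ComplexOrder

attribute [local instance] Matrix.normedAddCommGroup Matrix.normedSpace

theorem hasDerivAt_trace_mul' {N : ℕ} (f g : ℝ → Matrix (Fin N) (Fin N) ℂ)
    (f' g' : Matrix (Fin N) (Fin N) ℂ) (t : ℝ)
    (hf : HasDerivAt f f' t) (hg : HasDerivAt g g' t) :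
    HasDerivAt (fun s => (f s * g s).trace) ((f' * g t).trace + (f t * g').trace) t := by
  have hfe : ∀ i j, HasDerivAt (fun s => f s i j) (f' i j) t := fun i j =>
    hasDerivAt_pi.mp (hasDerivAt_pi.mp hf i) j
  have hge : ∀ i j, HasDerivAt (fun s => g s i j) (g' i j) t := fun i j =>
    hasDerivAt_pi.mp (hasDerivAt_pi.mp hg i) j
  have key : HasDerivAt (fun s => ∑ i, ∑ j, f s i j * g s j i)
      (∑ i, ∑ j, (f' i j * g t j i + f t i j * g' j i)) t := by
    apply HasDerivAt.fun_sum; intro i _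
    apply HasDerivAt.fun_sum; intro j _
    exact (hfe i j).mul (hge j i)
  have e1 : (fun s => (f s * g s).trace) = fun s => ∑ i, ∑ j, f s i j * g s j i := by
    funext s; simp [Matrix.trace, Matrix.mul_apply, Matrix.diag]
  have e2 : (f' * g t).trace + (f t * g').trace
      = ∑ i, ∑ j, (f' i j * g t j i + f t i j * g' j i) := by
    simp [Matrix.trace, Matrix.mul_apply, Matrix.diag, Finset.sum_add_distrib]
  rw [e1, e2]; exact key

theorem lyapunov_trace_algebra {N : ℕ} (A B r d : Matrix (Fin N) (Fin N) ℂ) (c : ℂ)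
    (hc : c = (d * (-Complex.I • (B * r - r * B))).trace) :
    ((-Complex.I • ((A + c • B) * r - r * (A + c • B))) * r).trace
    + (r * (-Complex.I • ((A + c • B) * r - r * (A + c • B)))).trace
    - ((-Complex.I • (A * d - d * A)) * r).trace
    - (d * (-Complex.I • ((A + c • B) * r - r * (A + c • B)))).trace
    = -c ^ 2 := by
  have e1 := Matrix.trace_mul_comm (A * r) r
  have e2 := Matrix.trace_mul_comm (r * A) r
  have e3 := Matrix.trace_mul_comm (B * r) r
  have e4 := Matrix.trace_mul_comm (r * B) r
  have e5 := Matrix.trace_mul_comm (A * d) r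
  have e6 := Matrix.trace_mul_comm (d * A) r
  have e7 := Matrix.trace_mul_comm d (B * r)
  have e8 := Matrix.trace_mul_comm d (r * B)
  have e9 := Matrix.trace_mul_comm d (r * A)
  simp only [Matrix.add_mul, Matrix.mul_add, Matrix.sub_mul, Matrix.mul_sub,
    Matrix.smul_mul, Matrix.mul_smul, Matrix.trace_add, Matrix.trace_sub,
    Matrix.trace_smul, smul_sub, smul_add, smul_smul, smul_eq_mul, mul_assoc] at *
  rw [e1, e2, e3, e4, e5, e6] at *
  rw [hc, e7, e8, e9]
  ring

/-- Along the closed loop `ρ' = -i[H_A + u H_B, ρ]`, `ρ_d' = -i[H_A, ρ_d]` with feedback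
`u = tr(ρ_d · (-i)[H_B, ρ])` (real-valued), the Lyapunov function
`V = tr(ρ²) - tr(ρ_d ρ)` satisfies `V' = -u² ≤ 0`. -/
theorem lyapunov_derivative_closed_loop {N : ℕ}
    (H_A H_B : Matrix (Fin N) (Fin N) ℂ)
    (hHA : H_Aᴴ = H_A) (hHB : H_Bᴴ = H_B)
    (ρ ρ_d : ℝ → Matrix (Fin N) (Fin N) ℂ)
    (hherm : ∀ t, (ρ t)ᴴ = ρ t) (hhermd : ∀ t, (ρ_d t)ᴴ = ρ_d t)
    (u : ℝ → ℂ)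
    (hu : ∀ t, u t = (ρ_d t * (-Complex.I • (H_B * ρ t - ρ t * H_B))).trace)
    (hureal : ∀ t, (u t).im = 0)
    (hρ : ∀ t, HasDerivAt ρ
      (-Complex.I • ((H_A + u t • H_B) * ρ t - ρ t * (H_A + u t • H_B))) t)
    (hρd : ∀ t, HasDerivAt ρ_d
      (-Complex.I • (H_A * ρ_d t - ρ_d t * H_A)) t) :
    ∀ t, HasDerivAt (fun s => (ρ s * ρ s).trace - (ρ_d s * ρ s).trace)
        (-(u t) ^ 2) t ∧ -(u t) ^ 2 ≤ 0 := by
  intro t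
  constructor
  · have h1 := hasDerivAt_trace_mul' ρ ρ _ _ t (hρ t) (hρ t)
    have h2 := hasDerivAt_trace_mul' ρ_d ρ _ _ t (hρd t) (hρ t)
    have h := h1.sub h2
    have hD := lyapunov_trace_algebra H_A H_B (ρ t) (ρ_d t) (u t) (hu t)
    exact h.congr_deriv (by rw [← hD]; ring)
  · have hre : u t = ((u t).re : ℂ) := by
      apply Complex.ext <;> simp [hureal t]
    rw [hre]
    have h2 : -((((u t).re : ℂ)) ^ 2) = ((-(((u t).re) ^ 2) : ℝ) : ℂ) := by
      push_cast; ring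
    rw [h2]
    have : ((0:ℝ):ℂ) = 0 := by norm_num
    rw [← this]
    exact_mod_cast neg_nonpos.mpr (sq_nonneg _)
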